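/- (Blindness of score matching to isolated components in the model.) Fix μ₁ ∈ ℝ, σ > 0 and π ∈ (0,1). Let q(x) = φ_{μ₁,σ}(x) be a single Gaussian and p_{μ₂}(x) = π φ_{μ₁,σ}(x) + (1−π) φ_{μ₂,σ}(x) a mixture containing an additional component. Then the Fisher divergence J(q ‖ p_{μ₂}) → 0 as μ₂ → +∞, regardless of the mixing proportion π. -/

import Mathlib

open MeasureTheory Filter

/-- Gaussian density with mean `μ` and standard deviation `σ`. -/
noncomputable def gaussian (μ σ : ℝ) (x : ℝ) : ℝ :=
  (σ * Real.sqrt (2 * Real.pi))⁻¹ * Real.exp (-(x - μ) ^ 2 / (2 * σ ^ 2))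

/-- The score of a density `ρ`: the derivative of its log. -/
noncomputable def score (ρ : ℝ → ℝ) (x : ℝ) : ℝ :=
  deriv (fun y => Real.log (ρ y)) x

/-- Fisher divergence between densities `q` and `p`. -/
noncomputable def fisherDiv (q p : ℝ → ℝ) : ℝ :=
  ∫ x : ℝ, q x * (score q x - score p x) ^ 2

lemma gaussian_pos (μ σ x : ℝ) (hσ : 0 < σ) : 0 < gaussian μ σ x := by
  unfold gaussian
  have := Real.pi_pos
  positivity

lemma hasDerivAt_gaussian (μ σ x : ℝ) (hσ : 0 < σ) :
    HasDerivAt (gaussian μ σ) (gaussian μ σ x * (-(x - μ) / σ ^ 2)) x := by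
  have h0 : HasDerivAt (fun y : ℝ => -(y - μ) ^ 2 / (2 * σ ^ 2)) (-(x - μ) / σ ^ 2) x := by
    have h1 : HasDerivAt (fun y : ℝ => (y - μ) ^ 2) (2 * (x - μ)) x := by
      simpa using ((hasDerivAt_id x).sub_const μ).fun_pow 2
    have h2 := (h1.neg).div_const (2 * σ ^ 2)
    exact h2.congr_deriv (by ring)
  have h3 := (h0.exp).const_mul ((σ * Real.sqrt (2 * Real.pi))⁻¹)
  exact h3.congr_deriv (by unfold gaussian; ring)

lemma score_gaussian (μ σ x : ℝ) (hσ : 0 < σ) :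
    score (gaussian μ σ) x = -(x - μ) / σ ^ 2 := by
  have hg := gaussian_pos μ σ x hσ
  have h := ((hasDerivAt_gaussian μ σ x hσ).log hg.ne').deriv
  rw [score, h, mul_comm, mul_div_assoc, div_self hg.ne', mul_one]

lemma score_mix (μ₁ μ₂ σ w x : ℝ) (hσ : 0 < σ) (hw0 : 0 < w) (hw1 : w < 1) :
    score (fun y => w * gaussian μ₁ σ y + (1 - w) * gaussian μ₂ σ y) x =
      (w * (gaussian μ₁ σ x * (-(x - μ₁) / σ ^ 2)) +
        (1 - w) * (gaussian μ₂ σ x * (-(x - μ₂) / σ ^ 2))) /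
        (w * gaussian μ₁ σ x + (1 - w) * gaussian μ₂ σ x) := by
  have hp : 0 < w * gaussian μ₁ σ x + (1 - w) * gaussian μ₂ σ x := by
    have h1 := gaussian_pos μ₁ σ x hσ
    have h2 := gaussian_pos μ₂ σ x hσ
    have : 0 < 1 - w := by linarith
    positivity
  have hd : HasDerivAt (fun y => w * gaussian μ₁ σ y + (1 - w) * gaussian μ₂ σ y)
      (w * (gaussian μ₁ σ x * (-(x - μ₁) / σ ^ 2)) +
        (1 - w) * (gaussian μ₂ σ x * (-(x - μ₂) / σ ^ 2))) x :=
    ((hasDerivAt_gaussian μ₁ σ x hσ).const_mul w).add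
      ((hasDerivAt_gaussian μ₂ σ x hσ).const_mul (1 - w))
  exact (hd.log hp.ne').deriv

lemma integrable_gaussian (μ σ : ℝ) (hσ : 0 < σ) : Integrable (gaussian μ σ) := by
  have h : gaussian μ σ = ProbabilityTheory.gaussianPDFReal μ ⟨σ ^ 2, sq_nonneg σ⟩ := by
    funext x
    unfold gaussian ProbabilityTheory.gaussianPDFReal
    have : Real.sqrt (2 * Real.pi * σ ^ 2) = σ * Real.sqrt (2 * Real.pi) := by
      rw [mul_comm (2 * Real.pi), Real.sqrt_mul (sq_nonneg σ), Real.sqrt_sq hσ.le]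
    change _ = (Real.sqrt (2 * Real.pi * σ ^ 2))⁻¹ * Real.exp (-(x - μ) ^ 2 / (2 * σ ^ 2))
    rw [this]
  rw [h]
  exact ProbabilityTheory.integrable_gaussianPDFReal μ _

lemma integral_gaussian_eq_one (μ σ : ℝ) (hσ : 0 < σ) : ∫ x : ℝ, gaussian μ σ x = 1 := by
  have h : gaussian μ σ = ProbabilityTheory.gaussianPDFReal μ ⟨σ ^ 2, sq_nonneg σ⟩ := by
    funext x
    unfold gaussian ProbabilityTheory.gaussianPDFReal
    have : Real.sqrt (2 * Real.pi * σ ^ 2) = σ * Real.sqrt (2 * Real.pi) := by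
      rw [mul_comm (2 * Real.pi), Real.sqrt_mul (sq_nonneg σ), Real.sqrt_sq hσ.le]
    change _ = (Real.sqrt (2 * Real.pi * σ ^ 2))⁻¹ * Real.exp (-(x - μ) ^ 2 / (2 * σ ^ 2))
    rw [this]
  rw [h]
  exact ProbabilityTheory.integral_gaussianPDFReal_eq_one μ
    (by simp [← NNReal.coe_ne_zero, hσ.ne'] : (⟨σ ^ 2, sq_nonneg σ⟩ : NNReal) ≠ 0)

-- product of gaussians as a square
lemma gaussian_mul_gaussian (μ₁ μ₂ σ x : ℝ) (hσ : 0 < σ) :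
    gaussian μ₁ σ x * gaussian μ₂ σ x =
      (Real.exp (-(μ₂ - μ₁) ^ 2 / (8 * σ ^ 2)) * gaussian ((μ₁ + μ₂) / 2) σ x) ^ 2 := by
  unfold gaussian
  have h : -(x - μ₁) ^ 2 / (2 * σ ^ 2) + -(x - μ₂) ^ 2 / (2 * σ ^ 2) =
      (-(μ₂ - μ₁) ^ 2 / (8 * σ ^ 2) + -(μ₂ - μ₁) ^ 2 / (8 * σ ^ 2)) +
      (-(x - (μ₁ + μ₂) / 2) ^ 2 / (2 * σ ^ 2) + -(x - (μ₁ + μ₂) / 2) ^ 2 / (2 * σ ^ 2)) := by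
    field_simp
    ring
  calc (σ * Real.sqrt (2 * Real.pi))⁻¹ * Real.exp (-(x - μ₁) ^ 2 / (2 * σ ^ 2)) *
      ((σ * Real.sqrt (2 * Real.pi))⁻¹ * Real.exp (-(x - μ₂) ^ 2 / (2 * σ ^ 2))) =
      ((σ * Real.sqrt (2 * Real.pi))⁻¹) ^ 2 *
        Real.exp (-(x - μ₁) ^ 2 / (2 * σ ^ 2) + -(x - μ₂) ^ 2 / (2 * σ ^ 2)) := by
        rw [Real.exp_add]; ring
    _ = _ := by rw [h, Real.exp_add, Real.exp_add, Real.exp_add]; ring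

theorem pointwise_bound (μ₁ μ₂ σ w x : ℝ) (hσ : 0 < σ) (hw0 : 0 < w) (hw1 : w < 1) :
    gaussian μ₁ σ x *
      (score (fun y => gaussian μ₁ σ y) x -
        score (fun y => w * gaussian μ₁ σ y + (1 - w) * gaussian μ₂ σ y) x) ^ 2 ≤
    (μ₂ - μ₁) ^ 2 / σ ^ 4 * Real.sqrt ((1 - w) / w) *
      Real.exp (-(μ₂ - μ₁) ^ 2 / (8 * σ ^ 2)) * gaussian ((μ₁ + μ₂) / 2) σ x := by
  have hg1 := gaussian_pos μ₁ σ x hσ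
  have hg2 := gaussian_pos μ₂ σ x hσ
  have h1w : (0:ℝ) < 1 - w := by linarith
  have hp : 0 < w * gaussian μ₁ σ x + (1 - w) * gaussian μ₂ σ x := by positivity
  set g1 := gaussian μ₁ σ x
  set g2 := gaussian μ₂ σ x
  set p := w * g1 + (1 - w) * g2 with hpdef
  have hdiff : score (fun y => gaussian μ₁ σ y) x -
      score (fun y => w * gaussian μ₁ σ y + (1 - w) * gaussian μ₂ σ y) x =
      (1 - w) * g2 * ((μ₁ - μ₂) / σ ^ 2) / p := by
    rw [show (fun y => gaussian μ₁ σ y) = gaussian μ₁ σ from rfl,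
      score_gaussian μ₁ σ x hσ, score_mix μ₁ μ₂ σ w x hσ hw0 hw1]
    have hp' : w * gaussian μ₁ σ x + (1 - w) * gaussian μ₂ σ x ≠ 0 := hp.ne'
    simp only [p, g1, g2]
    field_simp
    ring
  rw [hdiff]
  set a := (1 - w) * g2 / p with hadef
  have ha0 : 0 ≤ a := by positivity
  have ha1 : a ≤ 1 := by
    rw [hadef, div_le_one hp]
    nlinarith
  have ha2 : a ≤ (1 - w) * g2 / (w * g1) := by
    rw [hadef, div_le_div_iff₀ hp (mul_pos hw0 hg1), hpdef]
    nlinarith [sq_nonneg ((1 - w) * g2)]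
  have hkey : a ^ 2 ≤ Real.sqrt ((1 - w) * g2 / (w * g1)) := by
    rw [Real.le_sqrt (by positivity) (le_of_lt (div_pos (mul_pos h1w hg2) (mul_pos hw0 hg1)))]
    calc (a ^ 2) ^ 2 = a ^ 4 := by ring
    _ ≤ a := pow_le_of_le_one ha0 ha1 (by norm_num)
    _ ≤ _ := ha2
  have h2 : g1 * Real.sqrt ((1 - w) * g2 / (w * g1)) =
      Real.sqrt (g1 ^ 2 * ((1 - w) * g2 / (w * g1))) := by
    rw [Real.sqrt_mul (sq_nonneg g1), Real.sqrt_sq hg1.le]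
  have h3 : g1 ^ 2 * ((1 - w) * g2 / (w * g1)) = ((1 - w) / w) * (g1 * g2) := by
    field_simp
  have h4 : Real.sqrt (((1 - w) / w) * (g1 * g2)) =
      Real.sqrt ((1 - w) / w) *
        (Real.exp (-(μ₂ - μ₁) ^ 2 / (8 * σ ^ 2)) * gaussian ((μ₁ + μ₂) / 2) σ x) := by
    rw [Real.sqrt_mul (div_nonneg h1w.le hw0.le), gaussian_mul_gaussian μ₁ μ₂ σ x hσ,
      Real.sqrt_sq (mul_pos (Real.exp_pos _) (gaussian_pos _ _ _ hσ)).le]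
  have step : g1 * a ^ 2 ≤ Real.sqrt ((1 - w) / w) *
      (Real.exp (-(μ₂ - μ₁) ^ 2 / (8 * σ ^ 2)) * gaussian ((μ₁ + μ₂) / 2) σ x) := by
    calc g1 * a ^ 2 ≤ g1 * Real.sqrt ((1 - w) * g2 / (w * g1)) :=
          mul_le_mul_of_nonneg_left hkey hg1.le
    _ = _ := by rw [h2, h3, h4]
  calc g1 * ((1 - w) * g2 * ((μ₁ - μ₂) / σ ^ 2) / p) ^ 2
      = (μ₂ - μ₁) ^ 2 / σ ^ 4 * (g1 * a ^ 2) := by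
        rw [hadef]; field_simp; ring
    _ ≤ (μ₂ - μ₁) ^ 2 / σ ^ 4 * (Real.sqrt ((1 - w) / w) *
        (Real.exp (-(μ₂ - μ₁) ^ 2 / (8 * σ ^ 2)) * gaussian ((μ₁ + μ₂) / 2) σ x)) :=
        mul_le_mul_of_nonneg_left step (by positivity)
    _ = _ := by ring

/-- blindness of score matching to isolated components in the model,
separated components limit: `J(q ‖ p_{μ₂}) → 0` as `μ₂ → +∞`. -/
theorem fisher_blind_to_isolated_components_separation (μ₁ σ w : ℝ) (hσ : 0 < σ)
    (hw : w ∈ Set.Ioo (0 : ℝ) 1) :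
    Tendsto
      (fun μ₂ => fisherDiv (fun y => gaussian μ₁ σ y)
        (fun y => w * gaussian μ₁ σ y + (1 - w) * gaussian μ₂ σ y))
      atTop (nhds 0) := by
  obtain ⟨hw0, hw1⟩ := hw
  set C : ℝ → ℝ := fun μ₂ => (μ₂ - μ₁) ^ 2 / σ ^ 4 * Real.sqrt ((1 - w) / w) *
    Real.exp (-(μ₂ - μ₁) ^ 2 / (8 * σ ^ 2)) with hCdef
  have hlow : ∀ μ₂ : ℝ, 0 ≤ fisherDiv (fun y => gaussian μ₁ σ y)
      (fun y => w * gaussian μ₁ σ y + (1 - w) * gaussian μ₂ σ y) := fun μ₂ =>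
    integral_nonneg fun x => mul_nonneg (gaussian_pos μ₁ σ x hσ).le (sq_nonneg _)
  have hup : ∀ μ₂ : ℝ, fisherDiv (fun y => gaussian μ₁ σ y)
      (fun y => w * gaussian μ₁ σ y + (1 - w) * gaussian μ₂ σ y) ≤ C μ₂ := by
    intro μ₂
    have hInt : Integrable (fun x => C μ₂ * gaussian ((μ₁ + μ₂) / 2) σ x) :=
      (integrable_gaussian _ _ hσ).const_mul _
    have hmono := integral_mono_of_nonneg
      (f := fun x => gaussian μ₁ σ x *
        (score (fun y => gaussian μ₁ σ y) x -
          score (fun y => w * gaussian μ₁ σ y + (1 - w) * gaussian μ₂ σ y) x) ^ 2)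
      (g := fun x => C μ₂ * gaussian ((μ₁ + μ₂) / 2) σ x)
      (ae_of_all _ fun x => mul_nonneg (gaussian_pos μ₁ σ x hσ).le (sq_nonneg _))
      hInt
      (ae_of_all _ fun x => pointwise_bound μ₁ μ₂ σ w x hσ hw0 hw1)
    have h2 : (∫ x : ℝ, C μ₂ * gaussian ((μ₁ + μ₂) / 2) σ x) = C μ₂ := by
      rw [integral_const_mul, integral_gaussian_eq_one _ _ hσ, mul_one]
    exact le_of_le_of_eq hmono h2
  have hC : Tendsto C atTop (nhds 0) := by
    have ht : Tendsto (fun μ₂ : ℝ => (μ₂ - μ₁) ^ 2 / (8 * σ ^ 2)) atTop atTop := by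
      apply Tendsto.atTop_div_const (by positivity : (0:ℝ) < 8 * σ ^ 2)
      exact (tendsto_pow_atTop two_ne_zero).comp
        (tendsto_atTop_add_const_right _ (-μ₁) tendsto_id)
    have hte : Tendsto (fun t : ℝ => t * Real.exp (-t)) atTop (nhds 0) := by
      simpa using Real.tendsto_pow_mul_exp_neg_atTop_nhds_zero 1
    have hcomp := (hte.comp ht).const_mul (8 * σ ^ 2 / σ ^ 4 * Real.sqrt ((1 - w) / w))
    rw [mul_zero] at hcomp
    refine hcomp.congr fun μ₂ => ?_
    have harg : -((μ₂ - μ₁) ^ 2 / (8 * σ ^ 2)) = -(μ₂ - μ₁) ^ 2 / (8 * σ ^ 2) :=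
      (neg_div _ _).symm
    simp only [Function.comp, hCdef, harg]
    field_simp
  exact tendsto_of_tendsto_of_tendsto_of_le_of_le tendsto_const_nhds hC hlow hup
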